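/- Let M = (m_i)_{i=0}^∞ be a sequence of integers with m_0 = 1 and m_i ≥ 2 for all i ≥ 1. Then for every pair of positive integers n and r, the number p_M(m_1 m_2 ⋯ m_r n − 1) is divisible by ∏_{t=2}^{r} 𝓜(m_t, t−1), where the empty product (for r = 1) is 1. -/

import Mathlib

/-- `pM m n` = number of partitions of `n` into parts of the form `m 0 * m 1 * ⋯ * m r`. -/
noncomputable def pM (m : ℕ → ℕ) (n : ℕ) : ℕ :=
  Nat.card {p : n.Partition // ∀ j ∈ p.parts, ∃ r : ℕ, j = ∏ i ∈ Finset.range (r + 1), m i}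

/-- `𝓜(m,r) = m / gcd(m, lcm(1,…,r))`. -/
def Mcal (m r : ℕ) : ℕ := m / Nat.gcd m ((Finset.Icc 1 r).lcm id)


open Finset
local notation "Δ" => fwdDiff (1:ℕ)

/-- iterated fwdDiff of the zero function is zero -/
lemma fwdDiff_iter_zero (j : ℕ) : Δ^[j] (fun _ => (0:ℤ) : ℕ → ℤ) = (fun _ => 0) := by
  induction j with
  | zero => rfl
  | succ j ih => rw [Function.iterate_succ_apply, show Δ (fun _ => (0:ℤ) : ℕ → ℤ) = fun _ => 0 by ext x; simp [fwdDiff], ih]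

lemma fwdDiff_vanish_mono {f : ℕ → ℤ} {K i : ℕ} (h : Δ^[K] f = fun _ => 0) (hKi : K ≤ i) :
    Δ^[i] f = fun _ => 0 := by
  obtain ⟨j, rfl⟩ := Nat.exists_eq_add_of_le hKi
  rw [Nat.add_comm, Function.iterate_add_apply, h, fwdDiff_iter_zero]

/-- Δ^[e+1] of `x ↦ C(m x + c, e)` is zero. -/
lemma fwdDiff_choose_affine (m : ℕ) : ∀ e c : ℕ,
    Δ^[e+1] (fun x : ℕ => ((m*x+c).choose e : ℤ)) = fun _ => 0 := by
  intro e
  induction e with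
  | zero =>
    intro c
    simpa using (fwdDiff_const (1:ℕ) (1:ℤ))
  | succ e ih =>
    intro c
    rw [Function.iterate_succ_apply]
    have hstep : Δ (fun x : ℕ => ((m*x+c).choose (e+1) : ℤ))
        = ∑ u ∈ range m, (fun x : ℕ => ((m*x+(c+u)).choose e : ℤ)) := by
      ext x
      have key : ∀ d : ℕ, ((m*x+c+d).choose (e+1) : ℤ) - ((m*x+c).choose (e+1) : ℤ)
          = ∑ u ∈ range d, ((m*x+(c+u)).choose e : ℤ) := by
        intro d
        induction d with
        | zero => simp
        | succ d ihd =>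
          rw [Finset.sum_range_succ, ← ihd]
          have h3 : (m*x+c+(d+1)).choose (e+1) = (m*x+c+d).choose e + (m*x+c+d).choose (e+1) := by
            rw [show m*x+c+(d+1) = (m*x+c+d)+1 by ring, Nat.choose_succ_succ]
          rw [h3, show m*x+(c+d) = m*x+c+d by ring]
          push_cast
          ring
      have := key m
      simp only [fwdDiff, Finset.sum_apply]
      rw [show m*(x+1)+c = m*x+c+m by ring]
      exact this
    rw [hstep, fwdDiff_iter_finset_sum]
    ext x
    simp only [Finset.sum_apply]
    refine Finset.sum_eq_zero fun u _ => ?_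
    rw [ih (c+u)]

/-- truncated Newton formula -/
lemma newton_trunc (f : ℕ → ℤ) (K : ℕ) (h : ∀ i, K ≤ i → Δ^[i] f = fun _ => 0) (x : ℕ) :
    f x = ∑ e ∈ range K, Δ^[e] f 0 * (x.choose e : ℤ) := by
  have base := shift_eq_sum_fwdDiff_iter (1:ℕ) f x 0
  simp only [zero_add, smul_eq_mul, nsmul_eq_mul] at base
  have hx : f x = ∑ e ∈ range (x+1), (x.choose e : ℤ) * Δ^[e] f 0 := by
    simpa using base
  have h1 : ∑ e ∈ range (x+1), (x.choose e : ℤ) * Δ^[e] f 0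
      = ∑ e ∈ range (max (x+1) K), (x.choose e : ℤ) * Δ^[e] f 0 := by
    refine Finset.sum_subset (Finset.range_subset_range.mpr (le_max_left _ _)) ?_
    intro e _ he
    simp only [Finset.mem_range, not_lt] at he
    rw [Nat.choose_eq_zero_of_lt (lt_of_lt_of_le (Nat.lt_succ_self x) he)]
    simp
  have h2 : ∑ e ∈ range K, Δ^[e] f 0 * (x.choose e : ℤ)
      = ∑ e ∈ range (max (x+1) K), Δ^[e] f 0 * (x.choose e : ℤ) := by
    refine Finset.sum_subset (Finset.range_subset_range.mpr (le_max_right _ _)) ?_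
    intro e _ he
    simp only [Finset.mem_range, not_lt] at he
    rw [h e he]
    simp
  rw [hx, h1, h2]
  exact Finset.sum_congr rfl fun e _ => mul_comm _ _

lemma Mcal_dvd_choose {m : ℕ} (hm : 0 < m) {e : ℕ} (he : 1 ≤ e) (j : ℕ) :
    Mcal m e ∣ (m*j).choose e := by
  set L := (Finset.Icc 1 e).lcm id with hL
  have heL : e ∣ L := Finset.dvd_lcm (Finset.mem_Icc.mpr ⟨he, le_rfl⟩)
  have hml : m ∣ L * (m*j).choose e := by
    rcases Nat.eq_zero_or_pos j with rfl | hj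
    · rw [Nat.mul_zero, Nat.choose_eq_zero_of_lt he, Nat.mul_zero]
      exact dvd_zero m
    · have hmj : 1 ≤ m*j := Nat.one_le_iff_ne_zero.mpr (by positivity)
      have key : (m*j) * (m*j-1).choose (e-1) = (m*j).choose e * e := by
        have := Nat.add_one_mul_choose_eq (m*j-1) (e-1)
        rwa [Nat.sub_add_cancel hmj, Nat.sub_add_cancel he] at this
      obtain ⟨L', hL'⟩ := heL
      have : L * (m*j).choose e = L' * ((m*j) * (m*j-1).choose (e-1)) := by
        rw [key, hL']; ring
      rw [this]
      exact Dvd.dvd.mul_left (Dvd.dvd.mul_right (Dvd.intro j rfl) _) L'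
  set g := Nat.gcd m L with hg
  have hg0 : 0 < g := Nat.gcd_pos_of_pos_left L hm
  have cop : Nat.Coprime (m/g) (L/g) := Nat.coprime_div_gcd_div_gcd hg0
  have hmg : m / g * g = m := Nat.div_mul_cancel (Nat.gcd_dvd_left m L)
  have hLg : L / g * g = L := Nat.div_mul_cancel (Nat.gcd_dvd_right m L)
  have : (m/g) * g ∣ ((L/g) * (m*j).choose e) * g := by
    rw [hmg, mul_comm _ g, ← mul_assoc, mul_comm g (L/g), hLg]
    exact hml
  have h2 : (m/g) ∣ (L/g) * (m*j).choose e := (Nat.mul_dvd_mul_iff_right hg0).mp this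
  exact Nat.Coprime.dvd_of_dvd_mul_left cop h2

lemma Mcal_dvd_Mcal {m : ℕ} (hm : 0 < m) {e k : ℕ} (he : e ≤ k) : Mcal m k ∣ Mcal m e := by
  set Le := (Finset.Icc 1 e).lcm id
  set Lk := (Finset.Icc 1 k).lcm id
  have hLL : Le ∣ Lk := Finset.lcm_dvd fun t ht =>
    Finset.dvd_lcm (Finset.mem_Icc.mpr ⟨(Finset.mem_Icc.mp ht).1, le_trans (Finset.mem_Icc.mp ht).2 he⟩)
  have hgg : Nat.gcd m Le ∣ Nat.gcd m Lk :=
    Nat.dvd_gcd (Nat.gcd_dvd_left m Le) ((Nat.gcd_dvd_right m Le).trans hLL)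
  have hgm : Nat.gcd m Lk ∣ m := Nat.gcd_dvd_left m Lk
  -- m / gcd(m,Lk) ∣ m / gcd(m,Le)
  obtain ⟨s, hs⟩ := hgg
  obtain ⟨t, ht⟩ := hgm
  have hge : 0 < Nat.gcd m Le := Nat.gcd_pos_of_pos_left Le hm
  have hgk : 0 < Nat.gcd m Lk := Nat.gcd_pos_of_pos_left Lk hm
  have h1 : m / Nat.gcd m Lk = t := by
    apply Nat.div_eq_of_eq_mul_left hgk
    conv_lhs => rw [ht]
    exact mul_comm _ _
  have h2 : m / Nat.gcd m Le = s * t := by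
    apply Nat.div_eq_of_eq_mul_left hge
    conv_lhs => rw [ht, hs, mul_assoc]
    exact mul_comm _ _
  unfold Mcal
  rw [h1, h2]
  exact Dvd.intro_left s rfl

noncomputable def Wt (m : ℕ → ℕ) : ℕ → ℕ → ℤ
  | 0 => fun _ => 1
  | (k+1) => fun x => ∑ j ∈ Finset.Icc 1 x, Wt m k (m (k+1) * j)

def Dd (m : ℕ → ℕ) (k : ℕ) : ℕ := ∏ t ∈ Finset.Icc 2 k, Mcal (m t) (t-1)

theorem Wt_props (m : ℕ → ℕ) (hm : ∀ i, 1 ≤ i → 2 ≤ m i) :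
    ∀ k, 1 ≤ k → (Wt m k 0 = 0) ∧ (∀ i, k+1 ≤ i → Δ^[i] (Wt m k) = fun _ => 0)
      ∧ (∀ x, ((Dd m k : ℕ) : ℤ) ∣ Wt m k x) := by
  intro k hk
  induction k, hk using Nat.le_induction with
  | base =>
    have hW1 : Wt m 1 = fun x : ℕ => (x:ℤ) := by
      ext x
      show ∑ j ∈ Finset.Icc 1 x, (1:ℤ) = (x:ℤ)
      rw [Finset.sum_const, Nat.card_Icc]
      simp
    refine ⟨by rw [hW1]; simp, ?_, ?_⟩
    · intro i hi
      have h2 : Δ^[2] (Wt m 1) = fun _ => 0 := by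
        rw [hW1]
        have hd : Δ (fun x : ℕ => (x:ℤ)) = fun _ => 1 := by
          ext x; simp [fwdDiff]
        rw [show (2:ℕ) = 1+1 by rfl, Function.iterate_add_apply,
          Function.iterate_one, hd]
        ext x; simp [fwdDiff]
      exact fwdDiff_vanish_mono h2 hi
    · intro x
      have : Dd m 1 = 1 := by
        unfold Dd
        rw [Finset.Icc_eq_empty (by omega), Finset.prod_empty]
      rw [this]
      simp
  | succ k hk ih =>
    obtain ⟨ih0, ihd, ihdvd⟩ := ih
    set m' := m (k+1) with hm'def
    have hm' : 2 ≤ m' := hm _ (by omega)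
    have hDsplit : Dd m (k+1) = Dd m k * Mcal m' k := by
      unfold Dd
      rw [Finset.prod_Icc_succ_top (by omega : 2 ≤ k+1)]
      simp
      left; rfl
    have hterm : ∀ j : ℕ, ((Dd m (k+1) : ℕ):ℤ) ∣ Wt m k (m' * j) := by
      intro j
      rw [newton_trunc (Wt m k) (k+1) ihd (m' * j)]
      refine Finset.dvd_sum fun e he => ?_
      rcases Nat.eq_zero_or_pos e with rfl | he1
      · simp only [Function.iterate_zero, id_eq, ih0, zero_mul]
        exact dvd_zero _
      · have hek : e ≤ k := by
          have := Finset.mem_range.mp he; omega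
        rw [hDsplit]
        push_cast
        refine mul_dvd_mul ?_ ?_
        · -- Dd m k ∣ Δ^[e] (Wt m k) 0
          rw [fwdDiff_iter_eq_sum_shift]
          refine Finset.dvd_sum fun i _ => ?_
          rw [smul_eq_mul]
          exact Dvd.dvd.mul_left (ihdvd _) _
        · -- Mcal m' k ∣ choose (m'*j) e
          have h1 : Mcal m' k ∣ (m'*j).choose e :=
            (Mcal_dvd_Mcal (by omega) hek).trans (Mcal_dvd_choose (by omega) he1 j)
          exact_mod_cast Int.natCast_dvd_natCast.mpr h1
    refine ⟨?_, ?_, ?_⟩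
    · show ∑ j ∈ Finset.Icc 1 0, Wt m k (m' * j) = 0
      rw [Finset.Icc_eq_empty (by omega), Finset.sum_empty]
    · -- vanishing of high differences
      intro i hi
      have hA : Δ (Wt m (k+1)) = fun x => Wt m k (m' * (x+1)) := by
        ext x
        show (∑ j ∈ Finset.Icc 1 (x+1), Wt m k (m' * j))
            - (∑ j ∈ Finset.Icc 1 x, Wt m k (m' * j)) = _
        rw [Finset.sum_Icc_succ_top (by omega : 1 ≤ x+1)]
        ring
      have hB : (fun x => Wt m k (m' * (x+1)))
          = ∑ e ∈ Finset.range (k+1),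
              (Δ^[e] (Wt m k) 0) • (fun x : ℕ => ((m'*x + m').choose e : ℤ)) := by
        ext x
        rw [newton_trunc (Wt m k) (k+1) ihd (m' * (x+1))]
        rw [Finset.sum_apply]
        refine Finset.sum_congr rfl fun e _ => ?_
        rw [Pi.smul_apply, smul_eq_mul, show m'*(x+1) = m'*x + m' by ring]
      have hC : Δ^[k+1] (fun x => Wt m k (m' * (x+1))) = fun _ => 0 := by
        rw [hB, fwdDiff_iter_finset_sum]
        ext x
        rw [Finset.sum_apply]
        refine Finset.sum_eq_zero fun e he => ?_
        rw [fwdDiff_iter_const_smul]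
        have hv : Δ^[k+1] (fun x : ℕ => ((m'*x + m').choose e : ℤ)) = fun _ => 0 :=
          fwdDiff_vanish_mono (fwdDiff_choose_affine m' e m')
            (by have := Finset.mem_range.mp he; omega)
        rw [hv]
        simp
      have hk2 : Δ^[k+2] (Wt m (k+1)) = fun _ => 0 := by
        rw [show k+2 = (k+1)+1 by rfl, Function.iterate_succ_apply, hA, hC]
      exact fwdDiff_vanish_mono hk2 (by omega)
    · intro x
      show ((Dd m (k+1) : ℕ):ℤ) ∣ ∑ j ∈ Finset.Icc 1 x, Wt m k (m' * j)
      exact Finset.dvd_sum fun j _ => hterm j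

/-! ## Combinatorial part -/

def Pt (m : ℕ → ℕ) (k i : ℕ) : ℕ := ∏ t ∈ Finset.Icc (k+1) (k+i), m t

lemma Pt_zero (m : ℕ → ℕ) (k : ℕ) : Pt m k 0 = 1 := by
  unfold Pt
  rw [Finset.Icc_eq_empty (by omega), Finset.prod_empty]

lemma Pt_succ (m : ℕ → ℕ) (k i : ℕ) : Pt m k (i+1) = m (k+1) * Pt m (k+1) i := by
  unfold Pt
  rw [show k+(i+1) = (k+1)+i by ring, ← Finset.Ico_add_one_right_eq_Icc,
    Finset.prod_eq_prod_Ico_succ_bot (by omega), Finset.Ico_add_one_right_eq_Icc]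

lemma Pt_succ_top (m : ℕ → ℕ) (k i : ℕ) : Pt m k (i+1) = Pt m k i * m (k+i+1) := by
  unfold Pt
  rw [show k+(i+1) = (k+i)+1 by ring, Finset.prod_Icc_succ_top (by omega : k+1 ≤ k+i+1)]

section WithHm
variable {m : ℕ → ℕ} (hm : ∀ i, 1 ≤ i → 2 ≤ m i)
include hm

lemma Pt_ge (k i : ℕ) : i + 1 ≤ Pt m k i := by
  induction i with
  | zero => rw [Pt_zero]
  | succ i ih =>
    rw [Pt_succ_top]
    have h2 : 2 ≤ m (k+i+1) := hm _ (by omega)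
    calc i + 2 ≤ (i+1) * 2 := by omega
    _ ≤ Pt m k i * m (k+i+1) := Nat.mul_le_mul ih h2

lemma Pt_pos (k i : ℕ) : 0 < Pt m k i := lt_of_lt_of_le (by omega) (Pt_ge hm k i)

lemma Pt_strictMono (k : ℕ) : StrictMono (Pt m k) := by
  apply strictMono_nat_of_lt_succ
  intro i
  rw [Pt_succ_top]
  have h2 : 2 ≤ m (k+i+1) := hm _ (by omega)
  have := Pt_pos hm k i
  calc Pt m k i < Pt m k i * 2 := by omega
  _ ≤ Pt m k i * m (k+i+1) := Nat.mul_le_mul_left _ h2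

end WithHm

def wsum (m : ℕ → ℕ) (k : ℕ) (a : ℕ →₀ ℕ) : ℕ := a.sum fun i c => c * Pt m k i

lemma wsum_add (m : ℕ → ℕ) (k : ℕ) (a b : ℕ →₀ ℕ) :
    wsum m k (a + b) = wsum m k a + wsum m k b :=
  Finsupp.sum_add_index' (fun i => by simp) (fun i b1 b2 => add_mul b1 b2 _)

lemma wsum_single (m : ℕ → ℕ) (k i c : ℕ) :
    wsum m k (Finsupp.single i c) = c * Pt m k i :=
  Finsupp.sum_single_index (by simp)

noncomputable def shiftUp (a : ℕ →₀ ℕ) : ℕ →₀ ℕ :=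
  Finsupp.embDomain ⟨Nat.succ, Nat.succ_injective⟩ a

lemma shiftUp_apply_succ (a : ℕ →₀ ℕ) (i : ℕ) : shiftUp a (i+1) = a i := by
  unfold shiftUp
  exact Finsupp.embDomain_apply_self ⟨Nat.succ, Nat.succ_injective⟩ a i

lemma shiftUp_apply_zero (a : ℕ →₀ ℕ) : shiftUp a 0 = 0 := by
  unfold shiftUp
  apply Finsupp.embDomain_notin_range
  rintro ⟨i, hi⟩
  exact Nat.succ_ne_zero i hi

lemma wsum_shiftUp (m : ℕ → ℕ) (k : ℕ) (a : ℕ →₀ ℕ) :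
    wsum m k (shiftUp a) = m (k+1) * wsum m (k+1) a := by
  unfold wsum shiftUp
  rw [Finsupp.sum_embDomain, Finsupp.mul_sum]
  refine Finset.sum_congr rfl fun i _ => ?_
  show a i * Pt m k (i+1) = m (k+1) * (a i * Pt m (k+1) i)
  rw [Pt_succ]
  ring

noncomputable def tailF (a : ℕ →₀ ℕ) : ℕ →₀ ℕ :=
  Finsupp.comapDomain Nat.succ a (Nat.succ_injective.injOn)

lemma tailF_apply (a : ℕ →₀ ℕ) (i : ℕ) : tailF a i = a (i+1) := rfl

lemma decompF (a : ℕ →₀ ℕ) : Finsupp.single 0 (a 0) + shiftUp (tailF a) = a := by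
  ext i
  cases i with
  | zero =>
    simp [shiftUp_apply_zero, Finsupp.single_apply]
  | succ i =>
    simp [shiftUp_apply_succ, tailF_apply, Finsupp.single_apply]

lemma wsum_decomp (m : ℕ → ℕ) (k : ℕ) (a : ℕ →₀ ℕ) :
    wsum m k a = a 0 + m (k+1) * wsum m (k+1) (tailF a) := by
  conv_lhs => rw [← decompF a]
  rw [wsum_add, wsum_single, wsum_shiftUp, Pt_zero, mul_one]

lemma term_le_wsum (m : ℕ → ℕ) (k : ℕ) (a : ℕ →₀ ℕ) (i : ℕ) :
    a i * Pt m k i ≤ wsum m k a := by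
  by_cases hi : i ∈ a.support
  · exact Finset.single_le_sum (f := fun j => a j * Pt m k j) (fun j _ => Nat.zero_le _) hi
  · rw [Finsupp.notMem_support_iff.mp hi]
    simp

noncomputable def Sols (m : ℕ → ℕ) (k N : ℕ) : Finset (ℕ →₀ ℕ) :=
  (Finset.Iic (Finsupp.indicator (Finset.range (N+1)) (fun _ _ => N))).filter
    (fun a => wsum m k a = N)

lemma mem_Sols {m : ℕ → ℕ} (hm : ∀ i, 1 ≤ i → 2 ≤ m i) {k N : ℕ} {a : ℕ →₀ ℕ} :
    a ∈ Sols m k N ↔ wsum m k a = N := by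
  classical
  unfold Sols
  rw [Finset.mem_filter]
  constructor
  · exact fun h => h.2
  · intro h
    refine ⟨Finset.mem_Iic.mpr ?_, h⟩
    rw [Finsupp.le_def]
    intro i
    rw [Finsupp.indicator_apply]
    split_ifs with hi
    · -- a i ≤ N
      have h1 : a i * Pt m k i ≤ N := h ▸ term_le_wsum m k a i
      have h2 : 0 < Pt m k i := Pt_pos hm k i
      calc a i ≤ a i * Pt m k i := Nat.le_mul_of_pos_right _ h2
      _ ≤ N := h1
    · -- i > N, so a i = 0
      simp only [Finset.mem_range, not_lt] at hi
      by_contra hai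
      have hai' : 1 ≤ a i := by omega
      have h1 : a i * Pt m k i ≤ N := h ▸ term_le_wsum m k a i
      have h2 : i + 1 ≤ Pt m k i := Pt_ge hm k i
      have : Pt m k i ≤ a i * Pt m k i := by
        calc Pt m k i = 1 * Pt m k i := (one_mul _).symm
        _ ≤ a i * Pt m k i := Nat.mul_le_mul_right _ hai'
      omega

/-! ### partitions vs finsupp solutions -/

def pts (m : ℕ → ℕ) (k : ℕ) (a : ℕ →₀ ℕ) : Multiset ℕ :=
  a.sum fun i c => Multiset.replicate c (Pt m k i)

lemma pts_sum (m : ℕ → ℕ) (k : ℕ) (a : ℕ →₀ ℕ) : (pts m k a).sum = wsum m k a := by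
  unfold pts wsum
  rw [Finsupp.multiset_sum_sum]
  refine Finset.sum_congr rfl fun i _ => ?_
  show (Multiset.replicate (a i) (Pt m k i)).sum = a i * Pt m k i
  rw [Multiset.sum_replicate, smul_eq_mul]

lemma pts_mem (m : ℕ → ℕ) (k : ℕ) (a : ℕ →₀ ℕ) {x : ℕ} (hx : x ∈ pts m k a) :
    ∃ i, x = Pt m k i := by
  unfold pts at hx
  rw [Finsupp.sum, Multiset.mem_sum] at hx
  obtain ⟨i, _, hxi⟩ := hx
  exact ⟨i, Multiset.eq_of_mem_replicate hxi⟩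

lemma pts_count {m : ℕ → ℕ} (hm : ∀ i, 1 ≤ i → 2 ≤ m i) (k : ℕ) (a : ℕ →₀ ℕ) (i : ℕ) :
    Multiset.count (Pt m k i) (pts m k a) = a i := by
  classical
  unfold pts
  rw [Finsupp.sum, Multiset.count_sum']
  have : ∀ j ∈ a.support,
      Multiset.count (Pt m k i) (Multiset.replicate (a j) (Pt m k j))
        = if j = i then a j else 0 := by
    intro j _
    rw [Multiset.count_replicate]
    congr 1
    simp only [eq_iff_iff]
    exact ⟨fun h => (Pt_strictMono hm k).injective h.symm ▸ rfl,
      fun h => by rw [h]⟩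
  rw [Finset.sum_congr rfl this, Finset.sum_ite_eq' a.support i (fun j => a j)]
  split_ifs with h
  · rfl
  · exact (Finsupp.notMem_support_iff.mp h).symm

lemma prod_range_eq_Pt {m : ℕ → ℕ} (hm0 : m 0 = 1) (r : ℕ) :
    ∏ i ∈ Finset.range (r+1), m i = Pt m 0 r := by
  induction r with
  | zero => simp [hm0, Pt_zero]
  | succ r ih =>
    rw [Finset.prod_range_succ, ih, Pt_succ_top]
    norm_num

lemma pM_eq_card {m : ℕ → ℕ} (hm0 : m 0 = 1) (hm : ∀ i, 1 ≤ i → 2 ≤ m i) (N : ℕ) :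
    pM m N = (Sols m 0 N).card := by
  classical
  -- the bijection from finsupp solutions to restricted partitions
  have hcond : ∀ (j : ℕ), (∃ r : ℕ, j = ∏ i ∈ Finset.range (r + 1), m i) ↔ ∃ i, j = Pt m 0 i := by
    intro j
    constructor
    · rintro ⟨r, rfl⟩; exact ⟨r, (prod_range_eq_Pt hm0 r).symm ▸ rfl⟩
    · rintro ⟨i, rfl⟩; exact ⟨i, by rw [prod_range_eq_Pt hm0]⟩
  set T := {p : N.Partition // ∀ j ∈ p.parts, ∃ r : ℕ, j = ∏ i ∈ Finset.range (r + 1), m i}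
  set S := {a : ℕ →₀ ℕ // wsum m 0 a = N}
  let G : S → T := fun ⟨a, ha⟩ =>
    ⟨⟨pts m 0 a,
      fun {j} hj => by
        obtain ⟨i, rfl⟩ := pts_mem m 0 a hj
        exact Pt_pos hm 0 i,
      by rw [pts_sum, ha]⟩,
      fun j hj => (hcond j).mpr (pts_mem m 0 a hj)⟩
  have hGinj : Function.Injective G := by
    rintro ⟨a, ha⟩ ⟨b, hb⟩ hab
    have hparts : pts m 0 a = pts m 0 b := congrArg (fun t => t.1.parts) hab
    refine Subtype.ext (Finsupp.ext fun i => ?_)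
    rw [← pts_count hm 0 a i, ← pts_count hm 0 b i, hparts]
  have hGsurj : Function.Surjective G := by
    rintro ⟨p, hp⟩
    have hsupp : ∀ i, p.parts.count (Pt m 0 i) ≠ 0 → i ∈ Finset.range (N+1) := by
      intro i hi
      have hmem : Pt m 0 i ∈ p.parts := by
        by_contra hc
        exact hi (Multiset.count_eq_zero_of_notMem hc)
      have h1 : Pt m 0 i ≤ N := p.parts_sum ▸ Multiset.le_sum_of_mem hmem
      have h2 := Pt_ge hm 0 i
      rw [Finset.mem_range]
      omega
    set a : ℕ →₀ ℕ := Finsupp.onFinset (Finset.range (N+1))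
      (fun i => p.parts.count (Pt m 0 i)) hsupp with ha
    have haapp : ∀ i, a i = p.parts.count (Pt m 0 i) := fun i => rfl
    have hpts : pts m 0 a = p.parts := by
      ext x
      by_cases hx : ∃ i, x = Pt m 0 i
      · obtain ⟨i, rfl⟩ := hx
        rw [pts_count hm 0 a i, haapp]
      · rw [Multiset.count_eq_zero_of_notMem (fun hc => hx (pts_mem m 0 a hc)),
          Multiset.count_eq_zero_of_notMem (fun hc => hx ((hcond x).mp (hp x hc)))]
    have hws : wsum m 0 a = N := by
      rw [← pts_sum, hpts, p.parts_sum]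
    refine ⟨⟨a, hws⟩, ?_⟩
    apply Subtype.ext
    apply Nat.Partition.ext
    show pts m 0 a = p.parts
    exact hpts
  have hcard : Nat.card S = Nat.card T := Nat.card_eq_of_bijective G ⟨hGinj, hGsurj⟩
  have h2 : Nat.card S = (Sols m 0 N).card := by
    rw [← Nat.card_eq_finsetCard]
    exact Nat.card_congr (Equiv.subtypeEquivRight fun a => (mem_Sols hm).symm)
  unfold pM
  rw [← hcard, h2]

lemma sum_recursion {m : ℕ → ℕ} (hm : ∀ i, 1 ≤ i → 2 ≤ m i) (k N N' : ℕ)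
    (hNN : N + 1 = m (k+1) * (N' + 1)) (Wf : ℕ → ℤ) :
    ∑ a ∈ Sols m k N, Wf (a 0)
      = ∑ p ∈ (Sols m (k+1) N').sigma (fun a' => Finset.range (a' 0 + 1)),
          Wf (m (k+1) * p.2 + (m (k+1) - 1)) := by
  classical
  have hm' : 2 ≤ m (k+1) := hm _ (by omega)
  -- a key normal form for members of `Sols m k N`
  have key : ∀ a ∈ Sols m k N, a 0 = m (k+1) * (a 0 / m (k+1)) + (m (k+1) - 1) ∧
      wsum m (k+1) (tailF a) + (a 0 / m (k+1)) = N' := by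
    intro a ha
    have hws : wsum m k a = N := (mem_Sols hm).mp ha
    have hdec : N = a 0 + m (k+1) * wsum m (k+1) (tailF a) := by
      rw [← hws, wsum_decomp]
    set S := wsum m (k+1) (tailF a) with hS
    have hSle : S ≤ N' + 1 := by
      by_contra hc
      push_neg at hc
      have h3 : m (k+1) * (N'+2) ≤ m (k+1) * S := Nat.mul_le_mul_left _ (by omega)
      have h4 : m (k+1) * (N'+2) = m (k+1) * (N'+1) + m (k+1) := by ring
      omega
    set u := N' + 1 - S with hu
    have huS : S + u = N' + 1 := by omega
    have hexp : m (k+1) * (N' + 1) = m (k+1) * S + m (k+1) * u := by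
      rw [← huS, Nat.mul_add]
    have ha0 : a 0 + 1 = m (k+1) * u := by omega
    have hu1 : 1 ≤ u := by
      rcases Nat.eq_zero_or_pos u with h | h
      · rw [h, Nat.mul_zero] at ha0; omega
      · exact h
    set q := u - 1 with hq
    have hq1 : u = q + 1 := by omega
    have hexp2 : m (k+1) * (q + 1) = m (k+1) * q + m (k+1) := by ring
    have ha0' : a 0 = m (k+1) * q + (m (k+1) - 1) := by rw [hq1] at ha0; omega
    have hdivq : a 0 / m (k+1) = q := by
      rw [ha0', Nat.mul_add_div (by omega), Nat.div_eq_of_lt (by omega)]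
      omega
    rw [hdivq]
    exact ⟨ha0', by omega⟩
  refine Finset.sum_nbij'
    (i := fun a => ⟨tailF a + Finsupp.single 0 (a 0 / m (k+1)), a 0 / m (k+1)⟩)
    (j := fun p => Finsupp.single 0 (m (k+1) * p.2 + (m (k+1) - 1))
        + shiftUp (p.1.erase 0 + Finsupp.single 0 (p.1 0 - p.2)))
    ?_ ?_ ?_ ?_ ?_
  · -- forward membership
    intro a ha
    obtain ⟨ha0, hwa⟩ := key a ha
    rw [Finset.mem_sigma]
    dsimp only
    constructor
    · rw [mem_Sols hm, wsum_add, wsum_single, Pt_zero, mul_one, hwa]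
    · rw [Finset.mem_range, Finsupp.add_apply, Finsupp.single_eq_same]
      omega
  · -- backward membership
    rintro ⟨a', b⟩ hp
    rw [Finset.mem_sigma] at hp
    obtain ⟨hwa', hb⟩ := hp
    rw [mem_Sols hm] at hwa'
    rw [Finset.mem_range] at hb
    dsimp only at hwa' hb ⊢
    have hb' : b ≤ a' 0 := by omega
    rw [mem_Sols hm]
    set E := wsum m (k+1) (a'.erase 0) with hE
    have hsplit : E + a' 0 = N' := by
      have h5 : a'.erase 0 + Finsupp.single 0 (a' 0) = a' := Finsupp.erase_add_single 0 a'
      calc E + a' 0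
          = wsum m (k+1) (a'.erase 0) + wsum m (k+1) (Finsupp.single 0 (a' 0)) := by
            rw [wsum_single, Pt_zero, mul_one]
      _ = wsum m (k+1) a' := by rw [← wsum_add, h5]
      _ = N' := hwa'
    set d := a' 0 - b with hd
    have hbd : b + d = a' 0 := by omega
    have hwc : wsum m (k+1) (a'.erase 0 + Finsupp.single 0 (a' 0 - b)) = E + d := by
      rw [wsum_add, wsum_single, Pt_zero, mul_one]
    rw [wsum_add, wsum_single, Pt_zero, mul_one, wsum_shiftUp, hwc]
    have h1 : m (k+1) * (E + (b + d) + 1) = N + 1 := by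
      rw [show E + (b + d) + 1 = N' + 1 by omega]
      exact hNN.symm
    have h2 : m (k+1) * (E + (b + d) + 1)
        = m (k+1) * b + m (k+1) + m (k+1) * (E + d) := by ring
    omega
  · -- left inverse
    intro a ha
    obtain ⟨ha0, _⟩ := key a ha
    dsimp only
    have e1 : (tailF a + Finsupp.single 0 (a 0 / m (k+1))).erase 0 = (tailF a).erase 0 := by
      ext i
      rcases Nat.eq_zero_or_pos i with rfl | hi
      · simp [Finsupp.erase_same]
      · rw [Finsupp.erase_ne (by omega), Finsupp.erase_ne (by omega), Finsupp.add_apply,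
          Finsupp.single_apply, if_neg (by omega)]
        omega
    have e2 : (tailF a + Finsupp.single 0 (a 0 / m (k+1)) : ℕ →₀ ℕ) 0 - (a 0 / m (k+1))
        = tailF a 0 := by
      rw [Finsupp.add_apply, Finsupp.single_eq_same]
      omega
    rw [e1, e2, Finsupp.erase_add_single, ← ha0, decompF]
  · -- right inverse
    rintro ⟨a', b⟩ hp
    rw [Finset.mem_sigma] at hp
    obtain ⟨hwa', hb⟩ := hp
    rw [Finset.mem_range] at hb
    dsimp only at hb ⊢
    have hb' : b ≤ a' 0 := by omega
    set c := a'.erase 0 + Finsupp.single 0 (a' 0 - b) with hc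
    set A := Finsupp.single 0 (m (k+1) * b + (m (k+1) - 1)) + shiftUp c with hA
    have hA0 : A 0 = m (k+1) * b + (m (k+1) - 1) := by
      rw [hA, Finsupp.add_apply, shiftUp_apply_zero, Finsupp.single_eq_same]
      omega
    have htail : tailF A = c := by
      ext i
      rw [tailF_apply, hA, Finsupp.add_apply, Finsupp.single_apply, if_neg (by omega),
        shiftUp_apply_succ]
      omega
    have hdiv : A 0 / m (k+1) = b := by
      rw [hA0, Nat.mul_add_div (by omega), Nat.div_eq_of_lt (by omega)]
      omega
    rw [htail, hdiv, hc, add_assoc, ← Finsupp.single_add,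
      Nat.sub_add_cancel hb', Finsupp.erase_add_single]
  · -- weights agree
    intro a ha
    obtain ⟨ha0, _⟩ := key a ha
    dsimp only
    rw [← ha0]


/-- **Main theorem.** For a sequence `M = (mᵢ)` with `m₀ = 1` and `mᵢ ≥ 2` for `i ≥ 1`,
for all positive integers `n` and `r`, the product `∏_{t=2}^{r} 𝓜(m_t, t-1)` divides
`p_M(m₁ m₂ ⋯ m_r n - 1)`. -/
theorem pM_congruence (m : ℕ → ℕ) (hm0 : m 0 = 1) (hm : ∀ i, 1 ≤ i → 2 ≤ m i)
    (n r : ℕ) (hn : 1 ≤ n) (hr : 1 ≤ r) :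
    (∏ t ∈ Finset.Icc 2 r, Mcal (m t) (t - 1)) ∣
      pM m ((∏ t ∈ Finset.Icc 1 r, m t) * n - 1) := by

  have hprodpos : ∀ k : ℕ, 1 ≤ (∏ t ∈ Finset.Icc (k+1) r, m t) * n := by
    intro k
    refine Nat.mul_pos (Finset.prod_pos fun t ht => ?_) hn
    have := hm t (by have := (Finset.mem_Icc.mp ht).1; omega)
    omega
  have main : ∀ k, k ≤ r → (pM m ((∏ t ∈ Finset.Icc 1 r, m t) * n - 1) : ℤ)
      = ∑ a ∈ Sols m k ((∏ t ∈ Finset.Icc (k+1) r, m t) * n - 1), Wt m k (a 0 + 1) := by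
    intro k
    induction k with
    | zero =>
      intro _
      rw [pM_eq_card hm0 hm]
      have : ∀ a : ℕ →₀ ℕ, Wt m 0 (a 0 + 1) = 1 := fun a => rfl
      rw [Finset.sum_congr rfl fun a _ => this a, Finset.sum_const]
      norm_num
    | succ k ih =>
      intro hk1
      have hk := ih (by omega)
      have hν : (∏ t ∈ Finset.Icc (k+1) r, m t) * n
          = m (k+1) * ((∏ t ∈ Finset.Icc (k+2) r, m t) * n) := by
        rw [← Finset.Ico_add_one_right_eq_Icc, Finset.prod_eq_prod_Ico_succ_bot (by omega : k+1 < r+1),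
          Finset.Ico_add_one_right_eq_Icc]
        ring
      have hNN : ((∏ t ∈ Finset.Icc (k+1) r, m t) * n - 1) + 1
          = m (k+1) * (((∏ t ∈ Finset.Icc (k+2) r, m t) * n - 1) + 1) := by
        rw [Nat.sub_add_cancel (hprodpos k), Nat.sub_add_cancel (hprodpos (k+1)), hν]
      rw [hk, sum_recursion hm k _ _ hNN (fun c => Wt m k (c+1)), Finset.sum_sigma]
      refine Finset.sum_congr rfl fun a' ha' => ?_
      show ∑ b ∈ Finset.range (a' 0 + 1), Wt m k (m (k+1) * b + (m (k+1) - 1) + 1)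
          = Wt m (k+1) (a' 0 + 1)
      have hWdef : Wt m (k+1) (a' 0 + 1)
          = ∑ j ∈ Finset.Icc 1 (a' 0 + 1), Wt m k (m (k+1) * j) := rfl
      rw [hWdef, ← Finset.Ico_add_one_right_eq_Icc, Finset.sum_Ico_eq_sum_range]
      rw [show a' 0 + 1 + 1 - 1 = a' 0 + 1 by omega]
      refine Finset.sum_congr rfl fun b _ => ?_
      congr 1
      have hm' : 2 ≤ m (k+1) := hm _ (by omega)
      have hexp : m (k+1) * (1 + b) = m (k+1) + m (k+1) * b := by ring
      omega
  have hfin := main r le_rfl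
  have hdvd : ((Dd m r : ℕ) : ℤ) ∣ (pM m ((∏ t ∈ Finset.Icc 1 r, m t) * n - 1) : ℤ) := by
    rw [hfin]
    exact Finset.dvd_sum fun a _ => (Wt_props m hm r hr).2.2 (a 0 + 1)
  have hdvd2 : Dd m r ∣ pM m ((∏ t ∈ Finset.Icc 1 r, m t) * n - 1) := by
    exact_mod_cast hdvd
  exact hdvd2
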